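/- Let t and n be positive integers and let G be a bipartite graph with parts A and B of size n each such that for all subsets X ⊆ A and Y ⊆ B with |X| = |Y| = t there is at least one edge of G between X and Y. Then for every set S ⊆ V(G) with |S| < n − 2t, there is no partition of V(G) \ S into two disjoint sets W and Z, each of size at least 2t, with no edge of G between W and Z. -/
import Mathlib


/-- A set of vertices is independent: pairwise nonadjacent. -/
def IsIndep {V : Type*} (G : SimpleGraph V) (s : Set V) : Prop :=
  s.Pairwise fun u v => ¬ G.Adj u v

/-- Independence number of the subgraph of `G` induced by `X`. -/
noncomputable def indepNumOn {V : Type*} (G : SimpleGraph V) (X : Set V) : ℕ :=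
  sSup {k | ∃ s : Finset V, ↑s ⊆ X ∧ IsIndep G ↑s ∧ s.card = k}

/-- `M` is a matching in `G`: adjacent endpoints, pairwise vertex-disjoint edges. -/
def IsMatching' {V : Type*} (G : SimpleGraph V) (M : Finset (V × V)) : Prop :=
  (∀ e ∈ M, G.Adj e.1 e.2) ∧
  ∀ e ∈ M, ∀ f ∈ M, e ≠ f →
    e.1 ≠ f.1 ∧ e.1 ≠ f.2 ∧ e.2 ≠ f.1 ∧ e.2 ≠ f.2

/-- `M` is an induced matching in `G`. -/
def IsInducedMatching {V : Type*} (G : SimpleGraph V) (M : Finset (V × V)) : Prop :=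
  IsMatching' G M ∧
  ∀ e ∈ M, ∀ f ∈ M, e ≠ f →
    ¬ G.Adj e.1 f.1 ∧ ¬ G.Adj e.1 f.2 ∧ ¬ G.Adj e.2 f.1 ∧ ¬ G.Adj e.2 f.2

/-- `μ(G, X)`: maximum size of an induced matching in `G` every edge of which
has an endpoint in `X`. -/
noncomputable def indMatchNumOn {V : Type*} (G : SimpleGraph V) (X : Set V) : ℕ :=
  sSup {k | ∃ M : Finset (V × V), IsInducedMatching G M ∧
    (∀ e ∈ M, e.1 ∈ X ∨ e.2 ∈ X) ∧ M.card = k}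

/-- `(T, bag)` is a tree decomposition of `G`. -/
structure IsTreeDecomp {V : Type*} (G : SimpleGraph V) {ι : Type}
    (T : SimpleGraph ι) (bag : ι → Set V) : Prop where
  isTree : T.IsTree
  edge_mem : ∀ ⦃u v : V⦄, G.Adj u v → ∃ x, u ∈ bag x ∧ v ∈ bag x
  support_connected : ∀ v : V, (T.induce {x | v ∈ bag x}).Connected

/-- A (bundled) tree decomposition of `G`. -/
structure TreeDecomp {V : Type*} (G : SimpleGraph V) where
  ι : Type
  tree : SimpleGraph ι
  bag : ι → Set V
  is_td : IsTreeDecomp G tree bag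

/-- Independence number of a tree decomposition. -/
noncomputable def TreeDecomp.alpha {V : Type*} {G : SimpleGraph V} (D : TreeDecomp G) : ℕ :=
  sSup {k | ∃ x : D.ι, k = indepNumOn G (D.bag x)}

/-- Induced matching number of a tree decomposition. -/
noncomputable def TreeDecomp.mu {V : Type*} {G : SimpleGraph V} (D : TreeDecomp G) : ℕ :=
  sSup {k | ∃ x : D.ι, k = indMatchNumOn G (D.bag x)}

/-- Tree-independence number of `G`. -/
noncomputable def treeIndepNum {V : Type*} (G : SimpleGraph V) : ℕ :=
  sInf {k | ∃ D : TreeDecomp G, D.alpha = k}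

/-- Induced matching treewidth of `G`. -/
noncomputable def imTreewidth {V : Type*} (G : SimpleGraph V) : ℕ :=
  sInf {k | ∃ D : TreeDecomp G, D.mu = k}

/-- `G` has no induced subgraph isomorphic to `K_{t,t}`. -/
def KttFree {V : Type*} (G : SimpleGraph V) (t : ℕ) : Prop :=
  IsEmpty (completeBipartiteGraph (Fin t) (Fin t) ↪g G)

/-- `G` contains `K_{t,t}` as a (not necessarily induced) subgraph. -/
def HasKttSubgraph {V : Type*} (G : SimpleGraph V) (t : ℕ) : Prop :=
  ∃ A B : Finset V, Disjoint A B ∧ A.card = t ∧ B.card = t ∧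
    ∀ a ∈ A, ∀ b ∈ B, G.Adj a b

/-- `G` is bipartite: its vertex set is the union of two independent sets. -/
def IsBipartite {V : Type*} (G : SimpleGraph V) : Prop :=
  ∃ A B : Set V, A ∪ B = Set.univ ∧ IsIndep G A ∧ IsIndep G B

/-- `N(X)`: vertices outside `X` adjacent to at least one vertex of `X`. -/
def nbhd {V : Type*} (G : SimpleGraph V) (X : Set V) : Set V :=
  {v | v ∉ X ∧ ∃ u ∈ X, G.Adj u v}

/-- if `G` is bipartite with parts of size `n` and there is an edge between
any two `t`-subsets of opposite parts, then after removing any set `S` of fewer than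
`n - 2t` vertices, the rest cannot be partitioned into two sets `W`, `Z` of size at least
`2t` each with no edge between them. -/
theorem stmt14 (t n : ℕ) (ht : 0 < t) (hn : 0 < n)
    (G : SimpleGraph (Fin n ⊕ Fin n))
    (hbipA : ∀ a b : Fin n, ¬ G.Adj (Sum.inl a) (Sum.inl b))
    (hbipB : ∀ a b : Fin n, ¬ G.Adj (Sum.inr a) (Sum.inr b))
    (hdense : ∀ X Y : Finset (Fin n), X.card = t → Y.card = t →
      ∃ a ∈ X, ∃ b ∈ Y, G.Adj (Sum.inl a) (Sum.inr b))
    (S : Set (Fin n ⊕ Fin n)) (hS : (S.ncard : ℤ) < (n : ℤ) - 2 * (t : ℤ)) :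
    ¬ ∃ W Z : Set (Fin n ⊕ Fin n),
        W ∪ Z = Set.univ \ S ∧ Disjoint W Z ∧
        2 * t ≤ W.ncard ∧ 2 * t ≤ Z.ncard ∧
        ∀ w ∈ W, ∀ z ∈ Z, ¬ G.Adj w z := by
  classical
  rintro ⟨W, Z, hWZ, -, hWcard, hZcard, hnoedge⟩
  set fA : Set (Fin n ⊕ Fin n) → Finset (Fin n) :=
    fun P => Finset.univ.filter (fun a => Sum.inl a ∈ P) with hfA
  set fB : Set (Fin n ⊕ Fin n) → Finset (Fin n) :=
    fun P => Finset.univ.filter (fun b => Sum.inr b ∈ P) with hfB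
  -- key: if P has ≥ t left vertices and Q has ≥ t right vertices and no edges
  -- from P to Q, contradiction
  have key : ∀ P Q : Set (Fin n ⊕ Fin n), (∀ w ∈ P, ∀ z ∈ Q, ¬ G.Adj w z) →
      t ≤ (fA P).card → t ≤ (fB Q).card → False := by
    intro P Q hno hP hQ
    obtain ⟨X, hXsub, hXcard⟩ := Finset.exists_subset_card_eq hP
    obtain ⟨Y, hYsub, hYcard⟩ := Finset.exists_subset_card_eq hQ
    obtain ⟨a, ha, b, hb, hadj⟩ := hdense X Y hXcard hYcard
    have haP : Sum.inl a ∈ P := by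
      have := hXsub ha; simp [hfA] at this; exact this
    have hbQ : Sum.inr b ∈ Q := by
      have := hYsub hb; simp [hfB] at this; exact this
    exact hno _ haP _ hbQ hadj
  -- each set's ncard is at most the sum of the two sides
  have split : ∀ P : Set (Fin n ⊕ Fin n), P.ncard ≤ (fA P).card + (fB P).card := by
    intro P
    rw [Set.ncard_eq_toFinset_card']
    have hsub : P.toFinset ⊆ (fA P).map ⟨Sum.inl, Sum.inl_injective⟩ ∪
        (fB P).map ⟨Sum.inr, Sum.inr_injective⟩ := by
      intro v hv
      rw [Set.mem_toFinset] at hv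
      rcases v with a | b
      · exact Finset.mem_union_left _ (by simp [hfA, hv])
      · exact Finset.mem_union_right _ (by simp [hfB, hv])
    calc P.toFinset.card ≤ _ := Finset.card_le_card hsub
      _ ≤ _ := Finset.card_union_le _ _
      _ = (fA P).card + (fB P).card := by rw [Finset.card_map, Finset.card_map]
  -- side parts of S are at most |S|
  have hSA : (fA S).card ≤ S.ncard := by
    rw [Set.ncard_eq_toFinset_card']
    refine Finset.card_le_card_of_injOn Sum.inl ?_ ?_
    · intro a ha; simp [hfA] at ha; simp [ha]
    · intro a _ b _ h; exact Sum.inl_injective h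
  have hSB : (fB S).card ≤ S.ncard := by
    rw [Set.ncard_eq_toFinset_card']
    refine Finset.card_le_card_of_injOn Sum.inr ?_ ?_
    · intro a ha; simp [hfB] at ha; simp [ha]
    · intro a _ b _ h; exact Sum.inr_injective h
  -- counting each side
  have countA : n ≤ (fA W).card + (fA Z).card + (fA S).card := by
    have hsub : (Finset.univ : Finset (Fin n)) ⊆ (fA W ∪ fA Z) ∪ fA S := by
      intro a _
      by_cases hs : Sum.inl a ∈ S
      · exact Finset.mem_union_right _ (by simp [hfA, hs])
      · have : Sum.inl a ∈ W ∪ Z := by rw [hWZ]; exact ⟨trivial, hs⟩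
        rcases this with h | h
        · exact Finset.mem_union_left _ (Finset.mem_union_left _ (by simp [hfA, h]))
        · exact Finset.mem_union_left _ (Finset.mem_union_right _ (by simp [hfA, h]))
    calc n = (Finset.univ : Finset (Fin n)).card := (Finset.card_fin n).symm
      _ ≤ ((fA W ∪ fA Z) ∪ fA S).card := Finset.card_le_card hsub
      _ ≤ (fA W ∪ fA Z).card + (fA S).card := Finset.card_union_le _ _
      _ ≤ (fA W).card + (fA Z).card + (fA S).card := by
          have := Finset.card_union_le (fA W) (fA Z); omega
  have countB : n ≤ (fB W).card + (fB Z).card + (fB S).card := by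
    have hsub : (Finset.univ : Finset (Fin n)) ⊆ (fB W ∪ fB Z) ∪ fB S := by
      intro b _
      by_cases hs : Sum.inr b ∈ S
      · exact Finset.mem_union_right _ (by simp [hfB, hs])
      · have : Sum.inr b ∈ W ∪ Z := by rw [hWZ]; exact ⟨trivial, hs⟩
        rcases this with h | h
        · exact Finset.mem_union_left _ (Finset.mem_union_left _ (by simp [hfB, h]))
        · exact Finset.mem_union_left _ (Finset.mem_union_right _ (by simp [hfB, h]))
    calc n = (Finset.univ : Finset (Fin n)).card := (Finset.card_fin n).symm
      _ ≤ ((fB W ∪ fB Z) ∪ fB S).card := Finset.card_le_card hsub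
      _ ≤ (fB W ∪ fB Z).card + (fB S).card := Finset.card_union_le _ _
      _ ≤ (fB W).card + (fB Z).card + (fB S).card := by
          have := Finset.card_union_le (fB W) (fB Z); omega
  have hSsmall : S.ncard + 2 * t < n := by omega
  have hWsplit := split W
  have hZsplit := split Z
  have hnoedge' : ∀ w ∈ Z, ∀ z ∈ W, ¬ G.Adj w z :=
    fun w hw z hz h => hnoedge z hz w hw h.symm
  -- case analysis
  by_cases hWA : t ≤ (fA W).card
  · by_cases hZB : t ≤ (fB Z).card
    · exact key W Z hnoedge hWA hZB
    · by_cases hZA : t ≤ (fA Z).card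
      · by_cases hWB : t ≤ (fB W).card
        · exact key Z W hnoedge' hZA hWB
        · omega
      · omega
  · by_cases hWB : t ≤ (fB W).card
    · by_cases hZA : t ≤ (fA Z).card
      · exact key Z W hnoedge' hZA hWB
      · by_cases hZB : t ≤ (fB Z).card
        · omega
        · omega
    · omega
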